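/- For every λ ≥ 0, every natural number j ≥ 1 and every A ⊆ ℕ: −(1 − e^{−λ}) ≤ λ·(g(j+1,λ,A) − g(j,λ,A)) ≤ 1 − e^{−λ}, i.e. |λ·(g(j+1,λ,A) − g(j,λ,A))| ≤ 1 − e^{−λ}. -/

import Mathlib

open scoped BigOperators

/-- Poisson pmf: Po(k;lam) = lam^k * e^(-lam) / k!  (with the convention 0^0 = 1). -/
noncomputable def Po (k : ℕ) (lam : ℝ) : ℝ := lam ^ k * Real.exp (-lam) / (Nat.factorial k)

/-- Poisson measure of a set A of naturals: Po(A;lam) = sum over k in A of Po(k;lam). -/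
noncomputable def PoSet (A : Set ℕ) (lam : ℝ) : ℝ := ∑' k : A, Po k lam

/-- The scalar Stein-Chen solution g(j,lam,A), defined recursively by g(0,lam,A) = 0 and
g(j,lam,A) = lam⁻¹ * ((j-1)*g(j-1,lam,A) + 1_A(j-1) - Po(A;lam))
             + (1/j) * 1_{lam=0} * (1_A(0) - 1_A(j)) for j ≥ 1,
with the convention 0⁻¹ = 0. -/
noncomputable def steinChen : ℕ → ℝ → Set ℕ → ℝ
  | 0, _, _ => 0
  | (j + 1), lam, A =>
      lam⁻¹ * ((j : ℝ) * steinChen j lam A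
          + A.indicator (fun _ => (1 : ℝ)) j - PoSet A lam)
        + (1 / ((j : ℝ) + 1)) * (if lam = 0 then (1 : ℝ) else 0)
          * (A.indicator (fun _ => (1 : ℝ)) 0 - A.indicator (fun _ => (1 : ℝ)) (j + 1))

namespace SCAux

noncomputable def q (lam : ℝ) (k : ℕ) : ℝ := lam ^ k / (Nat.factorial k)

lemma q_nonneg {lam : ℝ} (h : 0 ≤ lam) (k : ℕ) : 0 ≤ q lam k := by
  unfold q; positivity

lemma q_summable (lam : ℝ) : Summable (q lam) := Real.summable_pow_div_factorial lam

lemma tsum_q (lam : ℝ) : ∑' k, q lam k = Real.exp lam := by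
  rw [Real.exp_eq_exp_ℝ, NormedSpace.exp_eq_tsum_div]; rfl

lemma q_zero (lam : ℝ) : q lam 0 = 1 := by simp [q]

lemma q_succ (lam : ℝ) (k : ℕ) : q lam (k + 1) = lam * q lam k / (k + 1) := by
  unfold q
  rw [Nat.factorial_succ, pow_succ]
  push_cast
  field_simp

noncomputable def ind (A : Set ℕ) (k : ℕ) : ℝ := A.indicator (fun _ => (1 : ℝ)) k

lemma ind_nonneg (A : Set ℕ) (k : ℕ) : 0 ≤ ind A k := by
  unfold ind; by_cases h : k ∈ A <;> simp [h]

lemma ind_le_one (A : Set ℕ) (k : ℕ) : ind A k ≤ 1 := by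
  unfold ind; by_cases h : k ∈ A <;> simp [h]

lemma Po_eq (k : ℕ) (lam : ℝ) : Po k lam = q lam k * Real.exp (-lam) := by
  unfold Po q; ring

lemma Po_nonneg {lam : ℝ} (h : 0 ≤ lam) (k : ℕ) : 0 ≤ Po k lam := by
  rw [Po_eq]; have := q_nonneg h k; positivity

lemma Po_summable (lam : ℝ) : Summable (fun k => Po k lam) := by
  simp only [Po_eq]
  exact (q_summable lam).mul_right _

lemma tsum_Po (lam : ℝ) : ∑' k, Po k lam = 1 := by
  simp only [Po_eq]
  rw [tsum_mul_right, tsum_q, ← Real.exp_add]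
  simp

lemma PoSet_eq (A : Set ℕ) (lam : ℝ) :
    PoSet A lam = ∑' k, ind A k * Po k lam := by
  unfold PoSet
  rw [tsum_subtype A (fun k => Po k lam)]
  refine tsum_congr fun k => ?_
  by_cases h : k ∈ A <;> simp [h, ind]

lemma PoSet_compl (A : Set ℕ) (lam : ℝ) : PoSet Aᶜ lam = 1 - PoSet A lam := by
  have h1 : Summable ((fun k => Po k lam) ∘ ((↑) : A → ℕ)) := (Po_summable lam).subtype A
  have h2 : Summable ((fun k => Po k lam) ∘ ((↑) : (Aᶜ : Set ℕ) → ℕ)) :=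
    (Po_summable lam).subtype Aᶜ
  have := Summable.tsum_add_tsum_compl (f := fun k => Po k lam) (s := A) h1 h2
  rw [tsum_Po] at this
  unfold PoSet
  linarith

lemma ind_compl (A : Set ℕ) (k : ℕ) : ind Aᶜ k = 1 - ind A k := by
  unfold ind; by_cases h : k ∈ A <;> simp [h]

lemma steinChen_succ (j : ℕ) (lam : ℝ) (A : Set ℕ) :
    steinChen (j + 1) lam A
      = lam⁻¹ * ((j : ℝ) * steinChen j lam A + ind A j - PoSet A lam)
        + (1 / ((j : ℝ) + 1)) * (if lam = 0 then (1 : ℝ) else 0)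
          * (ind A 0 - ind A (j + 1)) := rfl

lemma steinChen_compl {lam : ℝ} (hlam : lam ≠ 0) (A : Set ℕ) :
    ∀ n, steinChen n lam Aᶜ = - steinChen n lam A := by
  intro n
  induction n with
  | zero => simp [steinChen]
  | succ n ih =>
    rw [steinChen_succ, steinChen_succ, if_neg hlam, ih, PoSet_compl, ind_compl, ind_compl,
      ind_compl]
    ring

/-- Explicit solution formula for lam ≠ 0. -/
lemma steinChen_formula {lam : ℝ} (hlam : lam ≠ 0) (A : Set ℕ) :
    ∀ n, steinChen (n + 1) lam A
      = (Nat.factorial n / lam ^ (n + 1))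
        * ∑ k ∈ Finset.range (n + 1), q lam k * (ind A k - PoSet A lam) := by
  intro n
  induction n with
  | zero =>
    rw [steinChen_succ, if_neg hlam]
    simp [steinChen, q_zero]
  | succ n ih =>
    rw [steinChen_succ, if_neg hlam, ih]
    conv_rhs => rw [Finset.sum_range_succ]
    have hq : q lam (n + 1) = lam ^ (n+1) / (Nat.factorial (n+1)) := rfl
    have hfac : (Nat.factorial (n+1) : ℝ) = ((n : ℝ) + 1) * Nat.factorial n := by
      rw [Nat.factorial_succ]; push_cast; ring
    have hfn : (Nat.factorial n : ℝ) ≠ 0 := Nat.cast_ne_zero.mpr (Nat.factorial_ne_zero n)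
    have hfn1 : (Nat.factorial (n+1) : ℝ) ≠ 0 := Nat.cast_ne_zero.mpr (Nat.factorial_ne_zero (n+1))
    have hp : lam ^ (n+1) ≠ 0 := pow_ne_zero _ hlam
    have hp2 : lam ^ (n+2) ≠ 0 := pow_ne_zero _ hlam
    rw [hq, hfac]
    generalize ∑ k ∈ Finset.range (n + 1), q lam k * (ind A k - PoSet A lam) = S
    field_simp
    push_cast
    ring

noncomputable def aC (lam : ℝ) (m : ℕ) : ℝ := (Nat.factorial (m + 1)) / lam ^ (m + 1)
noncomputable def bC (lam : ℝ) (m : ℕ) : ℝ := (Nat.factorial m) / lam ^ m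

noncomputable def fF (lam : ℝ) (m k : ℕ) : ℝ :=
  (if k ≤ m + 1 then aC lam m * q lam k else 0) - (if k ≤ m then bC lam m * q lam k else 0)

noncomputable def Cst (lam : ℝ) (m : ℕ) : ℝ :=
  aC lam m * ∑ k ∈ Finset.range (m + 1 + 1), q lam k
    - bC lam m * ∑ k ∈ Finset.range (m + 1), q lam k

variable {lam : ℝ} {m : ℕ}

lemma aC_nonneg (h : 0 < lam) : 0 ≤ aC lam m := by unfold aC; positivity
lemma bC_nonneg (h : 0 < lam) : 0 ≤ bC lam m := by unfold bC; positivity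

lemma q_pos (h : 0 < lam) (k : ℕ) : 0 < q lam k := by unfold q; positivity

lemma q_aC (h : lam ≠ 0) : q lam (m + 1) * aC lam m = 1 := by
  unfold q aC
  have h1 : (Nat.factorial (m+1) : ℝ) ≠ 0 := Nat.cast_ne_zero.mpr (Nat.factorial_ne_zero _)
  have h2 : lam ^ (m+1) ≠ 0 := pow_ne_zero _ h
  field_simp

lemma q_bC (h : lam ≠ 0) : q lam (m + 1) * bC lam m = lam / ((m : ℝ) + 1) := by
  unfold q bC
  have h1 : (Nat.factorial m : ℝ) ≠ 0 := Nat.cast_ne_zero.mpr (Nat.factorial_ne_zero _)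
  have h2 : lam ^ m ≠ 0 := pow_ne_zero _ h
  have h3 : ((m : ℝ) + 1) ≠ 0 := by positivity
  rw [pow_succ, Nat.factorial_succ]
  push_cast
  field_simp

lemma aC_lam (h : lam ≠ 0) : aC lam m * lam = ((m : ℝ) + 1) * bC lam m := by
  unfold aC bC
  have h2 : lam ^ m ≠ 0 := pow_ne_zero _ h
  rw [pow_succ, Nat.factorial_succ]
  push_cast
  field_simp

lemma qC_eq (h : lam ≠ 0) :
    q lam (m + 1) * Cst lam m
      = (∑ k ∈ Finset.range (m + 1 + 1), q lam k)
        - (lam / ((m : ℝ) + 1)) * ∑ k ∈ Finset.range (m + 1), q lam k := by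
  unfold Cst
  rw [mul_sub, ← mul_assoc, ← mul_assoc, q_aC h, q_bC h, one_mul]

lemma one_le_qC (h : 0 < lam) : 1 ≤ q lam (m + 1) * Cst lam m := by
  rw [qC_eq h.ne', Finset.sum_range_succ' (fun k => q lam k) (m + 1), q_zero]
  have hle : (lam / ((m : ℝ) + 1)) * ∑ k ∈ Finset.range (m + 1), q lam k
      ≤ ∑ k ∈ Finset.range (m + 1), q lam (k + 1) := by
    rw [Finset.mul_sum]
    refine Finset.sum_le_sum fun k hk => ?_
    rw [q_succ, div_mul_eq_mul_div, mul_comm lam (q lam k)]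
    have hk' : (k : ℝ) + 1 ≤ (m : ℝ) + 1 := by
      have h5 : k ≤ m := by have := Finset.mem_range.mp hk; omega
      exact_mod_cast Nat.succ_le_succ h5
    rw [div_le_div_iff₀ (by positivity) (by positivity)]
    nlinarith [mul_nonneg (q_nonneg h.le k) h.le]
  linarith

lemma qC_le_exp (h : 0 < lam) : q lam (m + 1) * Cst lam m ≤ Real.exp lam := by
  rw [qC_eq h.ne']
  have h1 : ∑ k ∈ Finset.range (m + 1 + 1), q lam k ≤ Real.exp lam := by
    rw [← tsum_q]
    exact Summable.sum_le_tsum _ (fun i _ => q_nonneg h.le i) (q_summable lam)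
  have h2 : 0 ≤ (lam / ((m : ℝ) + 1)) * ∑ k ∈ Finset.range (m + 1), q lam k := by
    apply mul_nonneg (by positivity)
    exact Finset.sum_nonneg fun i _ => q_nonneg h.le i
  linarith

lemma Cst_nonneg (h : 0 < lam) : 0 ≤ Cst lam m := by
  have h1 := one_le_qC (m := m) h
  have h2 := q_pos h (m + 1)
  nlinarith

lemma sub_exp_le_Cst (h : 0 < lam) :
    (aC lam m - bC lam m) * Real.exp lam ≤ Cst lam m := by
  have hsum := q_summable lam
  have h1 := Summable.sum_add_tsum_nat_add (f := q lam) (m + 1 + 1) hsum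
  have h2 := Summable.sum_add_tsum_nat_add (f := q lam) (m + 1) hsum
  rw [tsum_q] at h1 h2
  have hT : aC lam m * ∑' i, q lam (i + (m + 1 + 1))
      ≤ bC lam m * ∑' i, q lam (i + (m + 1)) := by
    rw [← tsum_mul_left, ← tsum_mul_left]
    refine Summable.tsum_le_tsum (fun i => ?_)
      (((summable_nat_add_iff (m + 1 + 1)).mpr hsum).mul_left _)
      (((summable_nat_add_iff (m + 1)).mpr hsum).mul_left _)
    have hq : q lam (i + (m + 1 + 1)) = lam * q lam (i + (m + 1)) / ((i : ℝ) + m + 1 + 1) := by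
      have : i + (m + 1 + 1) = (i + (m + 1)) + 1 := by omega
      rw [this, q_succ]
      push_cast
      ring_nf
    rw [hq]
    have hb := bC_nonneg (m := m) h
    have hqn := q_nonneg h.le (i + (m + 1))
    have hd : (0 : ℝ) < (i : ℝ) + m + 1 + 1 := by positivity
    rw [mul_div_assoc', div_le_iff₀ hd]
    have e : aC lam m * (lam * q lam (i + (m + 1)))
        = ((m : ℝ) + 1) * bC lam m * q lam (i + (m + 1)) := by
      linear_combination q lam (i + (m + 1)) * aC_lam (m := m) h.ne'
    rw [e]
    have hmd : ((m : ℝ) + 1) ≤ (i : ℝ) + m + 1 + 1 := by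
      linarith [Nat.cast_nonneg (α := ℝ) i]
    nlinarith [mul_le_mul_of_nonneg_left hmd (mul_nonneg hb hqn)]
  have e1 : aC lam m * Real.exp lam
      = aC lam m * (∑ k ∈ Finset.range (m + 1 + 1), q lam k)
        + aC lam m * ∑' i, q lam (i + (m + 1 + 1)) := by rw [← h1]; ring
  have e2 : bC lam m * Real.exp lam
      = bC lam m * (∑ k ∈ Finset.range (m + 1), q lam k)
        + bC lam m * ∑' i, q lam (i + (m + 1)) := by rw [← h2]; ring
  unfold Cst
  nlinarith [hT, e1, e2]

lemma fF_le (h : 0 < lam) {k : ℕ} (hk : k ≤ m) :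
    fF lam m k ≤ Po k lam * Cst lam m := by
  unfold fF
  rw [if_pos (by omega), if_pos hk, Po_eq]
  have h9 := sub_exp_le_Cst (m := m) h
  have hexp : Real.exp lam * Real.exp (-lam) = 1 := by rw [← Real.exp_add]; simp
  have h10 : aC lam m - bC lam m ≤ Cst lam m * Real.exp (-lam) := by
    have := mul_le_mul_of_nonneg_right h9 (Real.exp_pos (-lam)).le
    rw [mul_assoc, hexp, mul_one] at this
    exact this
  have hq := q_nonneg h.le k
  nlinarith

lemma fF_top {k : ℕ} (hk : m + 1 + 1 ≤ k) : fF lam m k = 0 := by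
  unfold fF
  rw [if_neg (by omega), if_neg (by omega), sub_zero]

lemma fF_at (h : lam ≠ 0) : fF lam m (m + 1) = 1 := by
  unfold fF
  rw [if_pos le_rfl, if_neg (by omega), sub_zero, mul_comm, q_aC h]

lemma key_eq (hlam : lam ≠ 0) (A : Set ℕ) :
    lam * (steinChen (m + 1 + 1) lam A - steinChen (m + 1) lam A)
      = (∑ k ∈ Finset.range (m + 1 + 1), ind A k * fF lam m k)
        - PoSet A lam * Cst lam m := by
  have hS : ∀ n : ℕ, ∑ k ∈ Finset.range n, q lam k * (ind A k - PoSet A lam)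
      = (∑ k ∈ Finset.range n, q lam k * ind A k)
        - PoSet A lam * ∑ k ∈ Finset.range n, q lam k := by
    intro n
    rw [Finset.mul_sum, ← Finset.sum_sub_distrib]
    exact Finset.sum_congr rfl fun k _ => by ring
  have hsplit : ∑ k ∈ Finset.range (m + 1 + 1), ind A k * fF lam m k
      = aC lam m * (∑ k ∈ Finset.range (m + 1 + 1), q lam k * ind A k)
        - bC lam m * (∑ k ∈ Finset.range (m + 1), q lam k * ind A k) := by
    unfold fF
    simp only [mul_sub]
    rw [Finset.sum_sub_distrib]
    congr 1
    · rw [Finset.mul_sum]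
      refine Finset.sum_congr rfl fun k hk => ?_
      rw [if_pos (by have := Finset.mem_range.mp hk; omega)]
      ring
    · rw [Finset.sum_range_succ, if_neg (by omega), mul_zero, add_zero, Finset.mul_sum]
      refine Finset.sum_congr rfl fun k hk => ?_
      rw [if_pos (by have := Finset.mem_range.mp hk; omega)]
      ring
  rw [steinChen_formula hlam A (m + 1), steinChen_formula hlam A m, hsplit, hS, hS]
  unfold Cst aC bC
  have hp1 : lam ^ (m + 1) ≠ 0 := pow_ne_zero _ hlam
  have hp2 : lam ^ (m + 1 + 1) ≠ 0 := pow_ne_zero _ hlam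
  have hp0 : lam ^ m ≠ 0 := pow_ne_zero _ hlam
  field_simp
  ring

lemma upper (h : 0 < lam) (m : ℕ) (A : Set ℕ) :
    lam * (steinChen (m + 1 + 1) lam A - steinChen (m + 1) lam A)
      ≤ 1 - Real.exp (-lam) := by
  have hCnn := Cst_nonneg (m := m) h
  have hexp : Real.exp lam * Real.exp (-lam) = 1 := by rw [← Real.exp_add]; simp
  -- D_j bounds
  have hDj_nonneg : 0 ≤ 1 - Po (m + 1) lam * Cst lam m := by
    have h1 := qC_le_exp (m := m) h
    have := mul_le_mul_of_nonneg_right h1 (Real.exp_pos (-lam)).le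
    rw [Po_eq]
    nlinarith
  have hDj_le : 1 - Po (m + 1) lam * Cst lam m ≤ 1 - Real.exp (-lam) := by
    have h1 := one_le_qC (m := m) h
    have := mul_le_mul_of_nonneg_right h1 (Real.exp_pos (-lam)).le
    rw [Po_eq]
    nlinarith
  -- summability
  have hsf : Summable (fun k => ind A k * fF lam m k) := by
    apply summable_of_ne_finset_zero (s := Finset.range (m + 1 + 1))
    intro k hk
    rw [fF_top (by simpa using hk), mul_zero]
  have hsp : Summable (fun k => ind A k * (Po k lam * Cst lam m)) := by
    refine Summable.of_nonneg_of_le (fun k => ?_) (fun k => ?_)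
      ((Po_summable lam).mul_right (Cst lam m))
    · exact mul_nonneg (ind_nonneg A k) (mul_nonneg (Po_nonneg h.le k) hCnn)
    · exact mul_le_of_le_one_left (mul_nonneg (Po_nonneg h.le k) hCnn) (ind_le_one A k)
  -- rewrite as a tsum
  have hD : lam * (steinChen (m + 1 + 1) lam A - steinChen (m + 1) lam A)
      = ∑' k, (ind A k * fF lam m k - ind A k * (Po k lam * Cst lam m)) := by
    rw [key_eq h.ne' A, Summable.tsum_sub hsf hsp]
    congr 1
    · exact (tsum_eq_sum fun k hk => by rw [fF_top (by simpa using hk), mul_zero]).symm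
    · have e1 : ∑' k, ind A k * (Po k lam * Cst lam m)
          = (∑' k, ind A k * Po k lam) * Cst lam m := by
        rw [← tsum_mul_right]
        exact tsum_congr fun k => by ring
      rw [e1, ← PoSet_eq]
  rw [hD]
  -- pointwise bound
  have hpt : ∀ k, ind A k * fF lam m k - ind A k * (Po k lam * Cst lam m)
      ≤ if k = m + 1 then 1 - Po (m + 1) lam * Cst lam m else 0 := by
    intro k
    by_cases hk : k = m + 1
    · subst hk
      rw [if_pos rfl, fF_at h.ne']
      have h1 : ind A (m + 1) * (1 - Po (m + 1) lam * Cst lam m)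
          ≤ 1 - Po (m + 1) lam * Cst lam m :=
        mul_le_of_le_one_left hDj_nonneg (ind_le_one _ _)
      nlinarith [h1]
    · rw [if_neg hk]
      rcases le_or_gt k m with hle | hgt
      · have h1 := fF_le (m := m) h hle
        have h2 := mul_le_mul_of_nonneg_left h1 (ind_nonneg A k)
        linarith
      · have hk2 : m + 1 + 1 ≤ k := by omega
        rw [fF_top hk2, mul_zero, zero_sub, neg_nonpos]
        exact mul_nonneg (ind_nonneg A k) (mul_nonneg (Po_nonneg h.le k) hCnn)
  have hsum2 : Summable (fun k : ℕ =>
      if k = m + 1 then 1 - Po (m + 1) lam * Cst lam m else 0) := by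
    apply summable_of_ne_finset_zero (s := {m + 1})
    intro k hk
    rw [if_neg (by simpa using hk)]
  have hles := Summable.tsum_le_tsum hpt (hsf.sub hsp) hsum2
  rw [tsum_ite_eq] at hles
  linarith

end SCAux

/-- The Stein-Chen increment bound: for lam ≥ 0, j ≥ 1 and A ⊆ ℕ,
|lam * (g(j+1,lam,A) - g(j,lam,A))| ≤ 1 - e^(-lam). -/
theorem steinChen_delta_bound (lam : ℝ) (hlam : 0 ≤ lam) (j : ℕ) (hj : 1 ≤ j)
    (A : Set ℕ) :
    |lam * (steinChen (j + 1) lam A - steinChen j lam A)| ≤ 1 - Real.exp (-lam) := by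
  rcases eq_or_lt_of_le hlam with h0 | hpos
  · rw [← h0]
    simp
  · obtain ⟨m, rfl⟩ : ∃ m, j = m + 1 := ⟨j - 1, by omega⟩
    rw [abs_le]
    constructor
    · have hu := SCAux.upper hpos m Aᶜ
      have he : lam * (steinChen (m + 1 + 1) lam A - steinChen (m + 1) lam A)
          = -(lam * (steinChen (m + 1 + 1) lam Aᶜ - steinChen (m + 1) lam Aᶜ)) := by
        rw [SCAux.steinChen_compl hpos.ne' A (m + 1 + 1),
          SCAux.steinChen_compl hpos.ne' A (m + 1)]
        ring
      rw [he]
      linarith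
    · exact SCAux.upper hpos m A
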